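/- arXiv:2505.01045 — 6 statements merged into one kernel-verified Lean document; each statement's English description precedes it below -/
import Mathlib

section
/- Let H be a complex Hilbert space and T : H →L[ℂ] H a bounded self-adjoint operator with 0 ≤ T, and for λ > 0 let R_λ = (λ•1 + T)⁻¹. Then for every g ∈ H, every λ > 0, and f = √T g, one has √λ · ‖R_λ f‖ ≤ (1/2) ‖g‖. -/
open scoped InnerProductSpace

variable {H : Type*} [NormedAddCommGroup H] [InnerProductSpace ℂ H] [CompleteSpace H]

/-- The resolventOp `R_λ = (λ • 1 + T)⁻¹` of `-T`, as `Ring.inverse`. -/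
noncomputable def resolventOp (T : H →L[ℂ] H) (l : ℝ) : H →L[ℂ] H :=
  Ring.inverse (l • (1 : H →L[ℂ] H) + T)
/-- The key estimate `√λ ‖R_λ (√T g)‖ ≤ (1/2) ‖g‖`. -/
theorem sqrt_lambda_norm_resolvent_le (T : H →L[ℂ] H) (hT : IsSelfAdjoint T)
    (hpos : 0 ≤ T) (g : H) {l : ℝ} (hl : 0 < l) :
    Real.sqrt l * ‖resolventOp T l (CFC.sqrt T g)‖ ≤ (1 / 2) * ‖g‖ := by
  have hsp : ∀ x ∈ spectrum ℝ T, 0 ≤ x := fun x hx => spectrum_nonneg_of_nonneg hpos hx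
  have hne : ∀ x ∈ spectrum ℝ T, l + x ≠ 0 := fun x hx => by
    have := hsp x hx; positivity
  -- √T as a real cfc
  have hsqrt : CFC.sqrt T = cfc (fun t : ℝ => Real.sqrt t) T := by
    rw [CFC.sqrt_eq_cfc, cfc_nnreal_eq_real (a := T)]
    exact cfc_congr fun x _ => by rw [Real.sqrt]
  -- the resolvent as a real cfc
  have hres : resolventOp T l = cfc (fun t : ℝ => (l + t)⁻¹) T := by
    have h1 : l • (1 : H →L[ℂ] H) + T = cfc (fun t : ℝ => l + t) T := by
      rw [cfc_const_add l (fun t : ℝ => t) T, cfc_id' ℝ T,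
        Algebra.algebraMap_eq_smul_one]
    rw [resolventOp, h1, ← cfc_inv (fun t : ℝ => l + t) T hne]
  -- the composite operator
  set S : H →L[ℂ] H := cfc (fun t : ℝ => Real.sqrt t / (l + t)) T with hS
  have hc1 : ContinuousOn (fun t : ℝ => (l + t)⁻¹) (spectrum ℝ T) :=
    (continuousOn_const.add continuousOn_id).inv₀ hne
  have hc2 : ContinuousOn (fun t : ℝ => Real.sqrt t) (spectrum ℝ T) :=
    Real.continuous_sqrt.continuousOn
  have hcomp : resolventOp T l * CFC.sqrt T = S := by
    rw [hres, hsqrt, ← cfc_mul _ _ T hc1 hc2]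
    exact cfc_congr fun x _ => by rw [div_eq_inv_mul]
  have happ : resolventOp T l (CFC.sqrt T g) = S g := by
    rw [← hcomp]; rfl
  -- norm bound on S
  have hlpos := Real.sqrt_pos.mpr hl
  have hSnorm : ‖S‖ ≤ (2 * Real.sqrt l)⁻¹ := by
    apply norm_cfc_le (by positivity)
    intro x hx
    have hx0 := hsp x hx
    have hlx : 0 < l + x := by positivity
    rw [Real.norm_eq_abs, abs_of_nonneg (by positivity), ← one_div,
      div_le_div_iff₀ hlx (by positivity)]
    nlinarith [Real.sq_sqrt hl.le, Real.sq_sqrt hx0, Real.sqrt_nonneg x,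
      sq_nonneg (Real.sqrt l - Real.sqrt x)]
  calc Real.sqrt l * ‖resolventOp T l (CFC.sqrt T g)‖
      = Real.sqrt l * ‖S g‖ := by rw [happ]
    _ ≤ Real.sqrt l * ((2 * Real.sqrt l)⁻¹ * ‖g‖) := by
        apply mul_le_mul_of_nonneg_left _ hlpos.le
        exact (S.le_opNorm g).trans (by
          apply mul_le_mul_of_nonneg_right hSnorm (norm_nonneg g))
    _ = (1 / 2) * ‖g‖ := by
        field_simp
end

section
/- Let H be a complex Hilbert space and T : H →L[ℂ] H a bounded self-adjoint operator with 0 ≤ T, and for λ > 0 let R_λ = (λ•1 + T)⁻¹. Then for every f ∈ H, λ • R_λ f converges, as λ → 0⁺, to the orthogonal projection of f onto the kernel of T. -/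
open scoped InnerProductSpace
open ContinuousLinearMap

variable {H : Type*} [NormedAddCommGroup H] [InnerProductSpace ℂ H] [CompleteSpace H]

set_option linter.unusedSectionVars false in
lemma aux_re (T : H →L[ℂ] H) (l : ℝ) (x : H) :
    RCLike.re ⟪(l • (1 : H →L[ℂ] H) + T) x, x⟫_ℂ
      = l * ‖x‖^2 + RCLike.re ⟪T x, x⟫_ℂ := by
  rw [ContinuousLinearMap.add_apply, ContinuousLinearMap.smul_apply,
    ContinuousLinearMap.one_apply, inner_add_left, map_add,
    ← algebraMap_smul ℂ l x, inner_smul_left, inner_self_eq_norm_sq_to_K]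
  simp [← Complex.ofReal_pow]

lemma aux_isUnit (T : H →L[ℂ] H) (hpos : 0 ≤ T) {l : ℝ} (hl : 0 < l) :
    IsUnit (l • (1 : H →L[ℂ] H) + T) := by
  apply isUnit_of_forall_le_norm_inner_map _ (c := ⟨l, hl.le⟩) (by exact_mod_cast hl)
  intro x
  have h1 : 0 ≤ RCLike.re ⟪T x, x⟫_ℂ :=
    ((nonneg_iff_isPositive T).mp hpos).re_inner_nonneg_left x
  calc ‖x‖^2 * (⟨l, hl.le⟩ : NNReal) = l * ‖x‖^2 := by push_cast; ring
  _ ≤ RCLike.re ⟪(l • (1 : H →L[ℂ] H) + T) x, x⟫_ℂ := by rw [aux_re]; linarith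
  _ ≤ ‖⟪(l • (1 : H →L[ℂ] H) + T) x, x⟫_ℂ‖ := RCLike.re_le_norm _

lemma aux_SR (T : H →L[ℂ] H) (hpos : 0 ≤ T) {l : ℝ} (hl : 0 < l) (x : H) :
    (l • (1 : H →L[ℂ] H) + T) (resolventOp T l x) = x := by
  have h := Ring.mul_inverse_cancel _ (aux_isUnit T hpos hl)
  have := congrArg (fun A : H →L[ℂ] H => A x) h
  simpa [ContinuousLinearMap.mul_apply, resolventOp] using this

lemma aux_RS (T : H →L[ℂ] H) (hpos : 0 ≤ T) {l : ℝ} (hl : 0 < l) (x : H) :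
    resolventOp T l ((l • (1 : H →L[ℂ] H) + T) x) = x := by
  have h := Ring.inverse_mul_cancel _ (aux_isUnit T hpos hl)
  have := congrArg (fun A : H →L[ℂ] H => A x) h
  simpa [ContinuousLinearMap.mul_apply, resolventOp] using this

lemma aux_bound (T : H →L[ℂ] H) (hpos : 0 ≤ T) {l : ℝ} (hl : 0 < l) (x : H) :
    ‖l • resolventOp T l x‖ ≤ ‖x‖ := by
  set y := resolventOp T l x with hy
  have hSy : (l • (1 : H →L[ℂ] H) + T) y = x := aux_SR T hpos hl x
  have h1 : 0 ≤ RCLike.re ⟪T y, y⟫_ℂ :=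
    ((nonneg_iff_isPositive T).mp hpos).re_inner_nonneg_left y
  have h2 : l * ‖y‖^2 ≤ RCLike.re ⟪x, y⟫_ℂ := by
    rw [← hSy, aux_re]; linarith
  have h3 : RCLike.re ⟪x, y⟫_ℂ ≤ ‖x‖ * ‖y‖ :=
    (RCLike.re_le_norm _).trans (norm_inner_le_norm _ _)
  have h4 : l * ‖y‖ ≤ ‖x‖ := by
    rcases eq_or_lt_of_le (norm_nonneg y) with h | h
    · rw [← h]; simpa using norm_nonneg x
    · nlinarith
  rw [norm_smul, Real.norm_eq_abs, abs_of_pos hl]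
  exact h4

lemma aux_ker (T : H →L[ℂ] H) (hpos : 0 ≤ T) {l : ℝ} (hl : 0 < l) {x : H}
    (hx : x ∈ LinearMap.ker (T : H →ₗ[ℂ] H)) : l • resolventOp T l x = x := by
  have hx' : T x = 0 := hx
  have hS : (l • (1 : H →L[ℂ] H) + T) x = l • x := by
    simp [ContinuousLinearMap.add_apply, hx']
  have := aux_RS T hpos hl x
  rw [hS, ContinuousLinearMap.map_smul_of_tower] at this
  exact this

lemma aux_range (T : H →L[ℂ] H) (hpos : 0 ≤ T) {l : ℝ} (hl : 0 < l) (g : H) :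
    ‖l • resolventOp T l (T g)‖ ≤ 2 * l * ‖g‖ := by
  have hTg : T g = (l • (1 : H →L[ℂ] H) + T) g - l • g := by
    simp [ContinuousLinearMap.add_apply]
  have hR : resolventOp T l (T g) = g - l • resolventOp T l g := by
    rw [hTg, map_sub, aux_RS T hpos hl, ContinuousLinearMap.map_smul_of_tower]
  calc ‖l • resolventOp T l (T g)‖
      = ‖l • g - l • (l • resolventOp T l g)‖ := by rw [hR, smul_sub]
    _ ≤ ‖l • g‖ + ‖l • (l • resolventOp T l g)‖ := norm_sub_le _ _
    _ ≤ l * ‖g‖ + l * ‖g‖ := by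
        have b1 : ‖l • g‖ = l * ‖g‖ := by
          rw [norm_smul, Real.norm_eq_abs, abs_of_pos hl]
        have b2 : ‖l • (l • resolventOp T l g)‖ ≤ l * ‖g‖ := by
          rw [norm_smul, Real.norm_eq_abs, abs_of_pos hl]
          exact mul_le_mul_of_nonneg_left (aux_bound T hpos hl g) hl.le
        linarith
    _ = 2 * l * ‖g‖ := by ring

/-- Abelian ergodic theorem: `λ • R_λ f` converges as `λ → 0⁺` to the orthogonal
projection of `f` onto the kernel of `T`. -/
theorem tendsto_smul_resolvent_orthogonalProjection_ker (T : H →L[ℂ] H)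
    (hT : IsSelfAdjoint T) (hpos : 0 ≤ T) (f : H) :
    Filter.Tendsto (fun l : ℝ => l • resolventOp T l f) (nhdsWithin 0 (Set.Ioi 0))
      (nhds (Submodule.orthogonalProjectionOnto (LinearMap.ker (T : H →ₗ[ℂ] H)) f : H)) := by
  set K := LinearMap.ker (T : H →ₗ[ℂ] H) with hK
  set P : H := (K.orthogonalProjectionOnto f : H) with hP
  have hPK : P ∈ K := (K.orthogonalProjectionOnto f).2
  have hfP : f - P ∈ Kᗮ := Submodule.sub_starProjection_mem_orthogonal (K := K) f
  -- Kᗮ ⊆ closure of range T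
  have horth : (LinearMap.range (T : H →ₗ[ℂ] H))ᗮ ≤ K := by
    intro x hx
    have hTx : ∀ y : H, ⟪y, T x⟫_ℂ = 0 := by
      intro y
      have h1 : ⟪T y, x⟫_ℂ = 0 := hx (T y) ⟨y, rfl⟩
      rwa [← hT.adjoint_eq, ContinuousLinearMap.adjoint_inner_left] at h1
    have : T x = 0 := by
      have := hTx (T x)
      rwa [inner_self_eq_zero] at this
    exact this
  have hclos : (Kᗮ : Set H) ⊆ closure (LinearMap.range (T : H →ₗ[ℂ] H) : Set H) := by
    have h1 : Kᗮ ≤ (LinearMap.range (T : H →ₗ[ℂ] H)).topologicalClosure := by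
      rw [← Submodule.orthogonal_orthogonal_eq_closure]
      exact Submodule.orthogonal_le horth
    exact h1
  -- the tendsto of the orthogonal part to 0
  have h0 : Filter.Tendsto (fun l : ℝ => l • resolventOp T l (f - P))
      (nhdsWithin 0 (Set.Ioi 0)) (nhds 0) := by
    rw [NormedAddCommGroup.tendsto_nhds_zero]
    intro ε hε
    obtain ⟨b, hb, hbd⟩ := Metric.mem_closure_iff.mp (hclos hfP) (ε/2) (by linarith)
    obtain ⟨g, rfl⟩ := hb
    set δ := ε / (4 * (‖g‖ + 1)) with hδ
    have hgpos : (0:ℝ) < ‖g‖ + 1 := by positivity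
    have hδpos : 0 < δ := by positivity
    filter_upwards [Ioo_mem_nhdsGT_of_mem (Set.left_mem_Ico.mpr hδpos)] with l hl
    obtain ⟨hl0, hlδ⟩ := hl
    have hsplit : l • resolventOp T l (f - P)
        = l • resolventOp T l ((f - P) - T g) + l • resolventOp T l (T g) := by
      rw [← smul_add, ← map_add, sub_add_cancel]
    calc ‖l • resolventOp T l (f - P)‖
        ≤ ‖l • resolventOp T l ((f - P) - T g)‖ + ‖l • resolventOp T l (T g)‖ := by
          rw [hsplit]; exact norm_add_le _ _
      _ ≤ ‖(f - P) - T g‖ + 2 * l * ‖g‖ := by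
          gcongr
          · exact aux_bound T hpos hl0 _
          · exact aux_range T hpos hl0 g
      _ < ε/2 + 2 * δ * (‖g‖ + 1) := by
          have h1 : ‖(f - P) - T g‖ < ε/2 := by
            rw [dist_eq_norm] at hbd; exact hbd
          have h2 : 2 * l * ‖g‖ < 2 * δ * (‖g‖ + 1) := by nlinarith [norm_nonneg g]
          linarith
      _ ≤ ε := by
          have hne : (‖g‖ + 1) ≠ 0 := ne_of_gt hgpos
          have h5 : 2 * δ * (‖g‖ + 1) = ε/2 := by
            rw [hδ]; field_simp; ring
          linarith
  -- combine
  have heq : ∀ᶠ l in nhdsWithin (0:ℝ) (Set.Ioi 0),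
      l • resolventOp T l f = P + l • resolventOp T l (f - P) := by
    filter_upwards [self_mem_nhdsWithin] with l hl
    have hl0 : (0:ℝ) < l := hl
    have : l • resolventOp T l f
        = l • resolventOp T l P + l • resolventOp T l (f - P) := by
      rw [← smul_add, ← map_add, show P + (f - P) = f by abel]
    rw [this, aux_ker T hpos hl0 hPK]
  have := (tendsto_const_nhds (x := P)
      (f := nhdsWithin (0:ℝ) (Set.Ioi 0))).add h0
  rw [add_zero] at this
  exact Filter.Tendsto.congr' (heq.mono fun l h => h.symm) this
end

section
/- Let H be a complex Hilbert space and T : H →L[ℂ] H a bounded self-adjoint operator with 0 ≤ T, and for λ > 0 let R_λ = (λ•1 + T)⁻¹. Then for every g ∈ H, R_λ (T g) converges, as λ → 0⁺, to the orthogonal projection of g onto the orthogonal complement of the kernel of T. -/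
open scoped InnerProductSpace

variable {H : Type*} [NormedAddCommGroup H] [InnerProductSpace ℂ H] [CompleteSpace H]

section Aux

variable (T : H →L[ℂ] H)

omit [CompleteSpace H] in
lemma yosida_apply_eq {l : ℝ} (x : H) :
    (l • (1 : H →L[ℂ] H) + T) x = l • x + T x := by
  simp [ContinuousLinearMap.add_apply, ContinuousLinearMap.smul_apply]

lemma yosida_re_inner (hpos : 0 ≤ T) {l : ℝ} (x : H) :
    l * ‖x‖ ^ 2 ≤ RCLike.re ⟪(l • (1 : H →L[ℂ] H) + T) x, x⟫_ℂ := by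
  have hP := (T.nonneg_iff_isPositive.mp hpos).inner_nonneg_left x
  have hre : RCLike.re ⟪l • x, x⟫_ℂ = l * ‖x‖ ^ 2 := by
    rw [RCLike.real_smul_eq_coe_smul (K := ℂ), inner_smul_left, RCLike.conj_ofReal,
      RCLike.re_ofReal_mul, inner_self_eq_norm_sq]
  rw [yosida_apply_eq, inner_add_left, map_add, hre]
  unfold ContinuousLinearMap.reApplyInnerSelf at hP
  linarith [(RCLike.nonneg_iff.mp hP).1]

lemma yosida_isUnit (hpos : 0 ≤ T) {l : ℝ} (hl : 0 < l) :
    IsUnit (l • (1 : H →L[ℂ] H) + T) := by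
  refine ContinuousLinearMap.isUnit_of_forall_le_norm_inner_map _ (c := ⟨l, hl.le⟩)
    (by exact_mod_cast hl) fun x => ?_
  have h1 := yosida_re_inner T hpos (l := l) x
  have h2 := RCLike.re_le_norm (⟪(l • (1 : H →L[ℂ] H) + T) x, x⟫_ℂ)
  calc ‖x‖ ^ 2 * ((⟨l, hl.le⟩ : NNReal) : ℝ) = l * ‖x‖ ^ 2 := by push_cast; ring
    _ ≤ _ := h1.trans h2

lemma yosida_apply_resolvent (hpos : 0 ≤ T) {l : ℝ} (hl : 0 < l) (y : H) :
    (l • (1 : H →L[ℂ] H) + T) (resolventOp T l y) = y := by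
  have := Ring.mul_inverse_cancel _ (yosida_isUnit T hpos hl)
  calc (l • (1 : H →L[ℂ] H) + T) (resolventOp T l y)
      = ((l • (1 : H →L[ℂ] H) + T) * Ring.inverse (l • (1 : H →L[ℂ] H) + T)) y := rfl
    _ = y := by rw [this]; simp

lemma yosida_resolvent_apply (hpos : 0 ≤ T) {l : ℝ} (hl : 0 < l) (u : H) :
    resolventOp T l ((l • (1 : H →L[ℂ] H) + T) u) = u := by
  have := Ring.inverse_mul_cancel _ (yosida_isUnit T hpos hl)
  calc resolventOp T l ((l • (1 : H →L[ℂ] H) + T) u)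
      = ((Ring.inverse (l • (1 : H →L[ℂ] H) + T)) * (l • (1 : H →L[ℂ] H) + T)) u := rfl
    _ = u := by rw [this]; simp

lemma yosida_norm_resolvent (hpos : 0 ≤ T) {l : ℝ} (hl : 0 < l) (y : H) :
    l * ‖resolventOp T l y‖ ≤ ‖y‖ := by
  set x := resolventOp T l y with hx
  have h1 := yosida_re_inner T hpos (l := l) x
  have h2 := (RCLike.re_le_norm (⟪(l • (1 : H →L[ℂ] H) + T) x, x⟫_ℂ)).trans
    (norm_inner_le_norm _ _)
  have h3 := yosida_apply_resolvent T hpos hl y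
  rw [← hx] at h3
  rw [h3] at h1 h2
  rcases (norm_nonneg x).eq_or_lt with h0 | h0
  · rw [← h0, mul_zero]; exact norm_nonneg y
  · nlinarith [h1.trans h2]

lemma yosida_resolvent_T_apply (hpos : 0 ≤ T) {l : ℝ} (hl : 0 < l) (u : H) :
    resolventOp T l (T u) = u - l • resolventOp T l u := by
  have h1 : T u = (l • (1 : H →L[ℂ] H) + T) u - l • u := by
    rw [yosida_apply_eq, add_sub_cancel_left]
  rw [h1, map_sub, yosida_resolvent_apply T hpos hl, ContinuousLinearMap.map_smul_of_tower]

lemma yosida_orth_ker (hT : IsSelfAdjoint T) :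
    (LinearMap.ker (T : H →ₗ[ℂ] H))ᗮ = (LinearMap.range (T : H →ₗ[ℂ] H)).topologicalClosure := by
  have hswap : ∀ a b : H, ⟪T a, b⟫_ℂ = ⟪a, T b⟫_ℂ := fun a b => by
    conv_lhs => rw [← hT.adjoint_eq]
    exact ContinuousLinearMap.adjoint_inner_left T b a
  have h1 : (LinearMap.range (T : H →ₗ[ℂ] H))ᗮ = LinearMap.ker (T : H →ₗ[ℂ] H) := by
    ext x
    simp only [Submodule.mem_orthogonal, LinearMap.mem_ker]
    constructor
    · intro h
      have := h (T (T x)) (LinearMap.mem_range.mpr ⟨T x, rfl⟩)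
      rw [hswap] at this
      exact inner_self_eq_zero.mp this
    · rintro hx u hu
      obtain ⟨y, rfl⟩ := LinearMap.mem_range.mp hu
      rw [ContinuousLinearMap.coe_coe] at hx ⊢
      rw [hswap, hx, inner_zero_right]
  rw [← h1, Submodule.orthogonal_orthogonal_eq_closure]

end Aux

/-- Yosida's potential operator theorem: `R_λ (T g)` converges as `λ → 0⁺` to the
orthogonal projection of `g` onto the orthogonal complement of the kernel of `T`. -/
theorem tendsto_resolvent_apply_orthogonalProjection (T : H →L[ℂ] H)
    (hT : IsSelfAdjoint T) (hpos : 0 ≤ T) (g : H) :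
    Filter.Tendsto (fun l : ℝ => resolventOp T l (T g)) (nhdsWithin 0 (Set.Ioi 0))
      (nhds (Submodule.orthogonalProjectionOnto (LinearMap.ker (T : H →ₗ[ℂ] H))ᗮ g : H)) := by
  set K := LinearMap.ker (T : H →ₗ[ℂ] H) with hK
  set g₁ : H := (Submodule.orthogonalProjectionOnto Kᗮ g : H) with hg₁
  haveI : CompleteSpace K := T.isClosed_ker.completeSpace_coe
  have hg0 : g - g₁ ∈ Kᗮᗮ := Submodule.sub_starProjection_mem_orthogonal (K := Kᗮ) g
  rw [Submodule.orthogonal_orthogonal] at hg0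
  have hTg : T g = T g₁ := by
    have h0 : T (g - g₁) = 0 := LinearMap.mem_ker.mp hg0
    rw [map_sub, sub_eq_zero] at h0
    exact h0
  have hg₁K : g₁ ∈ Kᗮ := Submodule.coe_mem _
  have hg₁cl : g₁ ∈ closure ((LinearMap.range (T : H →ₗ[ℂ] H) : Submodule ℂ H) : Set H) := by
    rw [hK, yosida_orth_ker T hT] at hg₁K
    exact hg₁K
  have hlim : Filter.Tendsto (fun l : ℝ => l • resolventOp T l g₁)
      (nhdsWithin 0 (Set.Ioi 0)) (nhds 0) := by
    rw [Metric.tendsto_nhdsWithin_nhds]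
    intro ε hε
    obtain ⟨v, hv, hvdist⟩ := Metric.mem_closure_iff.mp hg₁cl (ε / 4) (by linarith)
    obtain ⟨u, rfl⟩ := LinearMap.mem_range.mp hv
    refine ⟨ε / (4 * (‖u‖ + 1)), by positivity, ?_⟩
    intro l hl hld
    have hl0 : 0 < l := hl
    rw [dist_zero_right, Real.norm_eq_abs, abs_of_pos hl0] at hld
    rw [dist_eq_norm, ContinuousLinearMap.coe_coe] at hvdist
    have e1 : l • resolventOp T l g₁
        = l • resolventOp T l (g₁ - T u) + l • (u - l • resolventOp T l u) := by
      rw [← yosida_resolvent_T_apply T hpos hl0, ← smul_add, ← map_add]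
      congr 2
      abel
    have b1 : l * ‖resolventOp T l (g₁ - T u)‖ ≤ ‖g₁ - T u‖ :=
      yosida_norm_resolvent T hpos hl0 _
    have b2 : l * ‖resolventOp T l u‖ ≤ ‖u‖ := yosida_norm_resolvent T hpos hl0 _
    have b3 : ‖u - l • resolventOp T l u‖ ≤ ‖u‖ + ‖u‖ := by
      calc ‖u - l • resolventOp T l u‖ ≤ ‖u‖ + ‖l • resolventOp T l u‖ := norm_sub_le _ _
        _ ≤ ‖u‖ + ‖u‖ := by
            rw [norm_smul, Real.norm_eq_abs, abs_of_pos hl0]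
            linarith
    have hub : l * (‖u‖ + 1) < ε / 4 := by
      rw [lt_div_iff₀ (by positivity : (0:ℝ) < 4 * (‖u‖ + 1))] at hld
      nlinarith [norm_nonneg u]
    rw [dist_zero_right, e1]
    calc ‖l • resolventOp T l (g₁ - T u) + l • (u - l • resolventOp T l u)‖
        ≤ ‖l • resolventOp T l (g₁ - T u)‖ + ‖l • (u - l • resolventOp T l u)‖ :=
          norm_add_le _ _
      _ ≤ ‖g₁ - T u‖ + l * (‖u‖ + ‖u‖) := by
          rw [norm_smul, norm_smul, Real.norm_eq_abs, abs_of_pos hl0]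
          have := mul_le_mul_of_nonneg_left b3 hl0.le
          linarith
      _ < ε := by nlinarith [norm_nonneg u]
  have hmain : Filter.Tendsto (fun l : ℝ => g₁ - l • resolventOp T l g₁)
      (nhdsWithin 0 (Set.Ioi 0)) (nhds (g₁ - 0)) := tendsto_const_nhds.sub hlim
  rw [sub_zero] at hmain
  refine hmain.congr' ?_
  filter_upwards [self_mem_nhdsWithin] with l hl
  rw [hTg, yosida_resolvent_T_apply T hpos hl g₁]
end

section
/- Let H be a complex Hilbert space and T : H →L[ℂ] H a bounded self-adjoint operator with 0 ≤ T, and for λ > 0 let R_λ = (λ•1 + T)⁻¹. Then for every f ∈ H the function λ ↦ ‖√T (R_λ f)‖ is antitone on (0, ∞): if 0 < μ ≤ λ then ‖√T (R_λ f)‖ ≤ ‖√T (R_μ f)‖. -/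
open scoped InnerProductSpace

variable {H : Type*} [NormedAddCommGroup H] [InnerProductSpace ℂ H] [CompleteSpace H]

lemma resolventOp_eq_cfc (T : H →L[ℂ] H) (hT : IsSelfAdjoint T)
    (hpos : 0 ≤ T) {l : ℝ} (hl : 0 < l) :
    resolventOp T l = cfc (fun t : ℝ => (l + t)⁻¹) T := by
  have hspec : ∀ t ∈ spectrum ℝ T, (0 : ℝ) ≤ t := fun t ht =>
    spectrum_nonneg_of_nonneg hpos ht
  have hne : ∀ t ∈ spectrum ℝ T, l + t ≠ 0 := fun t ht =>
    (lt_of_lt_of_le hl (le_add_of_nonneg_right (hspec t ht))).ne'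
  have hcfc : cfc (fun t : ℝ => l + t) T = l • 1 + T := by
    rw [cfc_add .. , cfc_const _ _, cfc_id' ℝ T, Algebra.algebraMap_eq_smul_one]
  rw [resolventOp, ← hcfc, ← cfc_inv (fun t : ℝ => l + t) T hne]

lemma norm_sq_sqrt_resolvent (T : H →L[ℂ] H) (hT : IsSelfAdjoint T)
    (hpos : 0 ≤ T) (f : H) {l : ℝ} (hl : 0 < l) :
    ‖CFC.sqrt T (resolventOp T l f)‖ ^ 2 =
      RCLike.re (⟪f, cfc (fun t : ℝ => (l + t)⁻¹ * (t * (l + t)⁻¹)) T f⟫_ℂ) := by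
  have hspec : ∀ t ∈ spectrum ℝ T, (0 : ℝ) ≤ t := fun t ht =>
    spectrum_nonneg_of_nonneg hpos ht
  have hne : ∀ t ∈ spectrum ℝ T, l + t ≠ 0 := fun t ht =>
    (lt_of_lt_of_le hl (le_add_of_nonneg_right (hspec t ht))).ne'
  have hcont : ContinuousOn (fun t : ℝ => (l + t)⁻¹) (spectrum ℝ T) :=
    ContinuousOn.inv₀ (by fun_prop) hne
  have hR := resolventOp_eq_cfc T hT hpos hl
  have hRsa : IsSelfAdjoint (resolventOp T l) := by
    rw [hR]; exact cfc_predicate _ T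
  have hSsa : IsSelfAdjoint (CFC.sqrt T) := IsSelfAdjoint.of_nonneg (CFC.sqrt_nonneg T)
  set S := CFC.sqrt T
  set R := resolventOp T l
  have h1 : ⟪S (R f), S (R f)⟫_ℂ = ⟪R f, T (R f)⟫_ℂ := by
    nth_rewrite 1 [← hSsa.adjoint_eq]
    rw [ContinuousLinearMap.adjoint_inner_left]
    congr 1
    have hss : S * S = T := CFC.sqrt_mul_sqrt_self T hpos
    calc S (S (R f)) = (S * S) (R f) := rfl
      _ = T (R f) := by rw [hss]
  have h2 : ⟪R f, T (R f)⟫_ℂ = ⟪f, R (T (R f))⟫_ℂ := by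
    nth_rewrite 1 [← hRsa.adjoint_eq]
    rw [ContinuousLinearMap.adjoint_inner_left]
  have h3 : R (T (R f)) = cfc (fun t : ℝ => (l + t)⁻¹ * (t * (l + t)⁻¹)) T f := by
    have hTR : T * R = cfc (fun t : ℝ => t * (l + t)⁻¹) T := by
      rw [cfc_mul (fun t : ℝ => t) (fun t : ℝ => (l + t)⁻¹) T (by fun_prop) hcont,
        cfc_id' ℝ T, ← hR]
    have hall : R * (T * R) = cfc (fun t : ℝ => (l + t)⁻¹ * (t * (l + t)⁻¹)) T := by
      rw [cfc_mul (fun t : ℝ => (l + t)⁻¹) (fun t : ℝ => t * (l + t)⁻¹) T hcont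
        (continuousOn_id.mul hcont), ← hR, ← hTR]
    calc R (T (R f)) = (R * (T * R)) f := rfl
      _ = _ := by rw [hall]
  rw [← h3, ← h2, ← h1, ← inner_self_eq_norm_sq (𝕜 := ℂ)]

/-- Antitonicity of `λ ↦ ‖√T (R_λ f)‖` on `(0, ∞)`. -/
theorem norm_sqrt_resolvent_antitone (T : H →L[ℂ] H) (hT : IsSelfAdjoint T)
    (hpos : 0 ≤ T) (f : H) {l m : ℝ} (hm : 0 < m) (hml : m ≤ l) :
    ‖CFC.sqrt T (resolventOp T l f)‖ ≤ ‖CFC.sqrt T (resolventOp T m f)‖ := by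
  have hl : 0 < l := hm.trans_le hml
  have hspec : ∀ t ∈ spectrum ℝ T, (0 : ℝ) ≤ t := fun t ht =>
    spectrum_nonneg_of_nonneg hpos ht
  have hnem : ∀ t ∈ spectrum ℝ T, m + t ≠ 0 := fun t ht =>
    (lt_of_lt_of_le hm (le_add_of_nonneg_right (hspec t ht))).ne'
  have hnel : ∀ t ∈ spectrum ℝ T, l + t ≠ 0 := fun t ht =>
    (lt_of_lt_of_le hl (le_add_of_nonneg_right (hspec t ht))).ne'
  have hcontm : ContinuousOn (fun t : ℝ => (m + t)⁻¹ * (t * (m + t)⁻¹)) (spectrum ℝ T) := by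
    have h := ContinuousOn.inv₀ (f := fun t : ℝ => m + t) (by fun_prop) hnem
    exact h.mul ((continuousOn_id).mul h)
  have hcontl : ContinuousOn (fun t : ℝ => (l + t)⁻¹ * (t * (l + t)⁻¹)) (spectrum ℝ T) := by
    have h := ContinuousOn.inv₀ (f := fun t : ℝ => l + t) (by fun_prop) hnel
    exact h.mul ((continuousOn_id).mul h)
  -- operator inequality
  have hle : (0 : H →L[ℂ] H) ≤ cfc (fun t : ℝ => (m + t)⁻¹ * (t * (m + t)⁻¹)) T
      - cfc (fun t : ℝ => (l + t)⁻¹ * (t * (l + t)⁻¹)) T := by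
    rw [← cfc_sub _ _ T hcontm hcontl]
    refine cfc_nonneg fun t ht => ?_
    have h0t := hspec t ht
    have h1 : 0 < m + t := lt_of_lt_of_le hm (le_add_of_nonneg_right h0t)
    have h2 : 0 < l + t := lt_of_lt_of_le hl (le_add_of_nonneg_right h0t)
    have h3 : (l + t)⁻¹ ≤ (m + t)⁻¹ :=
      inv_anti₀ h1 (by linarith)
    have h4 : (0:ℝ) ≤ (l + t)⁻¹ := (inv_pos.mpr h2).le
    have h5 : (0:ℝ) ≤ (m + t)⁻¹ := (inv_pos.mpr h1).le
    have : (l + t)⁻¹ * (t * (l + t)⁻¹) ≤ (m + t)⁻¹ * (t * (m + t)⁻¹) := by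
      apply mul_le_mul h3 (mul_le_mul_of_nonneg_left h3 h0t)
        (by positivity) h5
    linarith
  have hpos' := (ContinuousLinearMap.nonneg_iff_isPositive _).mp hle
  have key := hpos'.inner_nonneg_right f
  rw [ContinuousLinearMap.sub_apply, inner_sub_right] at key
  replace key := (RCLike.nonneg_iff.mp key).1
  rw [map_sub] at key
  have hsq : ‖CFC.sqrt T (resolventOp T l f)‖ ^ 2 ≤ ‖CFC.sqrt T (resolventOp T m f)‖ ^ 2 := by
    rw [norm_sq_sqrt_resolvent T hT hpos f hl, norm_sq_sqrt_resolvent T hT hpos f hm]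
    linarith
  have := Real.sqrt_le_sqrt hsq
  rwa [Real.sqrt_sq (norm_nonneg _), Real.sqrt_sq (norm_nonneg _)] at this
end

section
/- Let H be a complex Hilbert space and T : H →L[ℂ] H a bounded self-adjoint operator with 0 ≤ T, and for λ > 0 let R_λ = (λ•1 + T)⁻¹. Then for every g ∈ H and f = √T g, the quantity ‖√T (R_λ f)‖ converges, as λ → 0⁺, to ‖P g‖, where P is the orthogonal projection onto the orthogonal complement of the kernel of T; in particular if g is orthogonal to the kernel of T, then ‖√T (R_λ f)‖² increases to ‖g‖² as λ decreases to 0. -/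
set_option linter.unusedSectionVars false


open scoped InnerProductSpace

variable {H : Type*} [NormedAddCommGroup H] [InnerProductSpace ℂ H] [CompleteSpace H]

lemma re_Tx_x_nonneg {T : H →L[ℂ] H} (hpos : 0 ≤ T) (x : H) : 0 ≤ RCLike.re ⟪T x, x⟫_ℂ :=
  (RCLike.nonneg_iff.mp (((ContinuousLinearMap.nonneg_iff_isPositive T).mp hpos).inner_nonneg_left x)).1

lemma norm_sq_shift_apply (T : H →L[ℂ] H) (c : ℝ) (w : H) :
    ‖(c • (1 : H →L[ℂ] H) + T) w‖ ^ 2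
      = c ^ 2 * ‖w‖ ^ 2 + 2 * c * RCLike.re ⟪T w, w⟫_ℂ + ‖T w‖ ^ 2 := by
  have : (c • (1 : H →L[ℂ] H) + T) w = c • w + T w := by
    simp [ContinuousLinearMap.add_apply, ContinuousLinearMap.smul_apply,
      ContinuousLinearMap.one_apply]
  rw [this, norm_add_sq (𝕜 := ℂ)]
  have h1 : RCLike.re ⟪c • w, T w⟫_ℂ = c * RCLike.re ⟪T w, w⟫_ℂ := by
    rw [show c • w = (c : ℂ) • w from (RCLike.real_smul_eq_coe_smul (K := ℂ) c w),
      inner_smul_left, inner_re_symm]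
    simp [RCLike.mul_re]
  rw [h1, norm_smul]
  simp [mul_pow]
  ring
lemma lower_bound {T : H →L[ℂ] H} (hpos : 0 ≤ T) {l : ℝ} (hl : 0 < l) (x : H) :
    l * ‖x‖ ≤ ‖(l • (1 : H →L[ℂ] H) + T) x‖ := by
  have h := norm_sq_shift_apply T l x
  have h2 := re_Tx_x_nonneg hpos x
  nlinarith [norm_nonneg ((l • (1 : H →L[ℂ] H) + T) x), norm_nonneg x, norm_nonneg (T x),
    sq_nonneg (l * ‖x‖ - ‖(l • (1 : H →L[ℂ] H) + T) x‖), sq_nonneg (‖T x‖)]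

lemma isUnit_shift {T : H →L[ℂ] H} (hT : IsSelfAdjoint T) (hpos : 0 ≤ T) {l : ℝ} (hl : 0 < l) :
    IsUnit (l • (1 : H →L[ℂ] H) + T) := by
  set A : H →L[ℂ] H := l • (1 : H →L[ℂ] H) + T with hA
  have hAsa : IsSelfAdjoint A := by
    rw [hA, IsSelfAdjoint, star_add, star_smul, star_one, hT.star_eq, star_trivial]
  have hlow : ∀ x, l * ‖x‖ ≤ ‖A x‖ := fun x => lower_bound hpos hl x
  have hinj : LinearMap.ker (A : H →ₗ[ℂ] H) = ⊥ := by
    rw [LinearMap.ker_eq_bot']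
    intro x hx
    have := hlow x
    rw [show A x = 0 from hx, norm_zero] at this
    have : ‖x‖ ≤ 0 := by nlinarith
    simpa using le_antisymm this (norm_nonneg x)
  have hanti : AntilipschitzWith (⟨l⁻¹, by positivity⟩ : NNReal) A := by
    apply ContinuousLinearMap.antilipschitz_of_bound
    intro x
    have h := hlow x
    show ‖x‖ ≤ l⁻¹ * ‖A x‖
    rw [← le_div_iff₀' hl] at h
    simpa [div_eq_inv_mul] using h
  have hclosed : IsClosed (Set.range A) := hanti.isClosed_range A.uniformContinuous
  have hrange : LinearMap.range (A : H →ₗ[ℂ] H) = ⊤ := by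
    have hcl : (LinearMap.range (A : H →ₗ[ℂ] H)).topologicalClosure = LinearMap.range (A : H →ₗ[ℂ] H) := by
      apply SetLike.coe_injective
      rw [Submodule.topologicalClosure_coe]
      have : (LinearMap.range (A : H →ₗ[ℂ] H) : Set H) = Set.range A := by
        ext y; simp [LinearMap.mem_range, Set.mem_range]
      rw [this]
      exact hclosed.closure_eq
    have horth : (LinearMap.range (A : H →ₗ[ℂ] H))ᗮ = ⊥ := by
      rw [Submodule.eq_bot_iff]
      intro x hx
      have hx' : ∀ u : H, ⟪u, A x⟫_ℂ = 0 := by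
        intro u
        have h1 : ⟪A u, x⟫_ℂ = 0 := hx (A u) ⟨u, rfl⟩
        rwa [show ⟪A u, x⟫_ℂ = ⟪u, A x⟫_ℂ by
          conv_lhs => rw [← hAsa.adjoint_eq]
          exact ContinuousLinearMap.adjoint_inner_left A x u] at h1
      have hAx : A x = 0 := by
        have := hx' (A x)
        rwa [inner_self_eq_zero] at this
      have := LinearMap.ker_eq_bot'.mp hinj x hAx
      exact this
    have := congrArg (fun K : Submodule ℂ H => Kᗮ) horth
    simp only [Submodule.bot_orthogonal_eq_top] at this
    rw [← this, Submodule.orthogonal_orthogonal_eq_closure, hcl]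
  let e := ContinuousLinearEquiv.ofBijective A hinj hrange
  refine ⟨⟨A, (e.symm : H →L[ℂ] H), ?_, ?_⟩, rfl⟩
  · ext x
    have h1 : A (e.symm x) = e (e.symm x) := by
      rw [ContinuousLinearEquiv.coeFn_ofBijective]
    simp [ContinuousLinearMap.mul_apply, h1]
  · ext x
    have h1 : A x = e x := by rw [ContinuousLinearEquiv.coeFn_ofBijective]
    simp [ContinuousLinearMap.mul_apply, h1]


lemma commute_ringInverse {α : Type*} [Ring α] {a b : α} (h : Commute a b) (ha : IsUnit a) :
    Commute (Ring.inverse a) b := by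
  obtain ⟨u, rfl⟩ := ha
  rw [Ring.inverse_unit]
  exact h.units_inv_left

section algebra
variable {T : H →L[ℂ] H} {l : ℝ}

lemma AR_eq_one (hu : IsUnit (l • (1 : H →L[ℂ] H) + T)) :
    (l • (1 : H →L[ℂ] H) + T) * resolventOp T l = 1 := Ring.mul_inverse_cancel _ hu

lemma RA_eq_one (hu : IsUnit (l • (1 : H →L[ℂ] H) + T)) :
    resolventOp T l * (l • (1 : H →L[ℂ] H) + T) = 1 := Ring.inverse_mul_cancel _ hu

lemma commute_T_A : Commute T (l • (1 : H →L[ℂ] H) + T) := by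
  show T * _ = _ * T
  simp [mul_add, add_mul, smul_mul_assoc, mul_smul_comm]

lemma commute_sqrt_T (hpos : 0 ≤ T) : Commute (CFC.sqrt T) T := by
  have hSS : CFC.sqrt T * CFC.sqrt T = T := CFC.sqrt_mul_sqrt_self T hpos
  show CFC.sqrt T * T = T * CFC.sqrt T
  calc CFC.sqrt T * T = CFC.sqrt T * (CFC.sqrt T * CFC.sqrt T) := by rw [hSS]
    _ = CFC.sqrt T * CFC.sqrt T * CFC.sqrt T := by rw [mul_assoc]
    _ = T * CFC.sqrt T := by rw [hSS]

lemma commute_sqrt_A (hpos : 0 ≤ T) :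
    Commute (CFC.sqrt T) (l • (1 : H →L[ℂ] H) + T) := by
  show CFC.sqrt T * _ = _ * CFC.sqrt T
  rw [mul_add, add_mul, (commute_sqrt_T hpos).eq, mul_smul_comm, smul_mul_assoc,
    mul_one, one_mul]

lemma commute_R_T (hu : IsUnit (l • (1 : H →L[ℂ] H) + T)) : Commute (resolventOp T l) T :=
  commute_ringInverse commute_T_A.symm hu

lemma commute_R_sqrt (hpos : 0 ≤ T) (hu : IsUnit (l • (1 : H →L[ℂ] H) + T)) :
    Commute (resolventOp T l) (CFC.sqrt T) :=
  commute_ringInverse (commute_sqrt_A hpos).symm hu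

lemma TR_eq (hu : IsUnit (l • (1 : H →L[ℂ] H) + T)) :
    T * resolventOp T l = 1 - l • resolventOp T l := by
  have h : (l • (1 : H →L[ℂ] H) + T - l • 1) * resolventOp T l
      = 1 - l • resolventOp T l := by
    rw [sub_mul, AR_eq_one hu, smul_mul_assoc, one_mul]
  rwa [add_sub_cancel_left] at h

lemma sqrt_R_sqrt_apply (hpos : 0 ≤ T) (hu : IsUnit (l • (1 : H →L[ℂ] H) + T)) (g : H) :
    CFC.sqrt T (resolventOp T l (CFC.sqrt T g)) = g - l • resolventOp T l g := by
  have hSS : CFC.sqrt T * CFC.sqrt T = T := CFC.sqrt_mul_sqrt_self T hpos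
  have h : CFC.sqrt T * (resolventOp T l * CFC.sqrt T) = 1 - l • resolventOp T l := by
    rw [(commute_R_sqrt hpos hu).eq, ← mul_assoc, hSS, TR_eq hu]
  calc CFC.sqrt T (resolventOp T l (CFC.sqrt T g))
      = (CFC.sqrt T * (resolventOp T l * CFC.sqrt T)) g := by
        simp [ContinuousLinearMap.mul_apply]
    _ = g - l • resolventOp T l g := by
        rw [h]; simp [ContinuousLinearMap.sub_apply, ContinuousLinearMap.smul_apply]

lemma R_bound (hpos : 0 ≤ T) (hl : 0 < l) (hu : IsUnit (l • (1 : H →L[ℂ] H) + T)) (y : H) :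
    l * ‖resolventOp T l y‖ ≤ ‖y‖ := by
  have h := lower_bound hpos hl (resolventOp T l y)
  calc l * ‖resolventOp T l y‖ ≤ ‖(l • (1 : H →L[ℂ] H) + T) (resolventOp T l y)‖ := h
    _ = ‖((l • (1 : H →L[ℂ] H) + T) * resolventOp T l) y‖ := by
        rw [ContinuousLinearMap.mul_apply]
    _ = ‖y‖ := by rw [AR_eq_one hu]; simp

lemma R_ker (hl : 0 < l) (hu : IsUnit (l • (1 : H →L[ℂ] H) + T)) {k : H} (hk : T k = 0) :
    l • resolventOp T l k = k := by
  have h1 : (l • (1 : H →L[ℂ] H) + T) (l⁻¹ • k) = k := by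
    simp [ContinuousLinearMap.add_apply, ContinuousLinearMap.smul_apply,
      ContinuousLinearMap.one_apply, smul_smul, mul_inv_cancel₀ hl.ne', map_smul, hk]
  have h2 : resolventOp T l k = l⁻¹ • k := by
    conv_lhs => rw [← h1]
    rw [← ContinuousLinearMap.mul_apply, RA_eq_one hu]
    simp
  rw [h2, smul_smul, mul_inv_cancel₀ hl.ne', one_smul]

end algebra

section mono
variable {T : H →L[ℂ] H}

lemma commute_Rl_Am {l m : ℝ} (hul : IsUnit (l • (1 : H →L[ℂ] H) + T)) :
    Commute (resolventOp T l) (m • (1 : H →L[ℂ] H) + T) := by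
  have cRlT : Commute (resolventOp T l) T := commute_R_T hul
  show _ * _ = _ * _
  rw [mul_add, add_mul, cRlT.eq, mul_smul_comm, smul_mul_assoc, mul_one, one_mul]

lemma mono_norm (hT : IsSelfAdjoint T) (hpos : 0 ≤ T) {l m : ℝ}
    (hm : 0 < m) (hml : m ≤ l) (x : H) :
    ‖x - l • resolventOp T l x‖ ≤ ‖x - m • resolventOp T m x‖ := by
  have hl : 0 < l := lt_of_lt_of_le hm hml
  have hul : IsUnit (l • (1 : H →L[ℂ] H) + T) := isUnit_shift hT hpos hl
  have hum : IsUnit (m • (1 : H →L[ℂ] H) + T) := isUnit_shift hT hpos hm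
  have cRlT : Commute (resolventOp T l) T := commute_R_T hul
  have cRlAm : Commute (resolventOp T l) (m • (1 : H →L[ℂ] H) + T) := commute_Rl_Am hul
  have cRmRl : Commute (resolventOp T m) (resolventOp T l) :=
    commute_ringInverse cRlAm.symm hum
  have hOp : 1 - l • resolventOp T l
      = ((m • (1 : H →L[ℂ] H) + T) * resolventOp T l) * (1 - m • resolventOp T m) := by
    rw [← TR_eq hul, ← TR_eq hum]
    calc T * resolventOp T l
        = T * (((m • (1 : H →L[ℂ] H) + T) * resolventOp T m) * resolventOp T l) := by
          rw [AR_eq_one hum, one_mul]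
      _ = (T * (m • (1 : H →L[ℂ] H) + T)) * (resolventOp T m * resolventOp T l) := by
          rw [mul_assoc, mul_assoc]
      _ = ((m • (1 : H →L[ℂ] H) + T) * T) * (resolventOp T l * resolventOp T m) := by
          rw [commute_T_A.eq, cRmRl.eq]
      _ = (m • (1 : H →L[ℂ] H) + T) * ((T * resolventOp T l) * resolventOp T m) := by
          rw [mul_assoc, mul_assoc]
      _ = (m • (1 : H →L[ℂ] H) + T) * ((resolventOp T l * T) * resolventOp T m) := by
          rw [cRlT.eq]
      _ = ((m • (1 : H →L[ℂ] H) + T) * resolventOp T l) * (T * resolventOp T m) := by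
          rw [mul_assoc, mul_assoc]
  have hB : ∀ y : H, ‖((m • (1 : H →L[ℂ] H) + T) * resolventOp T l) y‖ ≤ ‖y‖ := by
    intro y
    have hy : (l • (1 : H →L[ℂ] H) + T) (resolventOp T l y) = y := by
      rw [← ContinuousLinearMap.mul_apply, AR_eq_one hul, ContinuousLinearMap.one_apply]
    have hsq : ‖(m • (1 : H →L[ℂ] H) + T) (resolventOp T l y)‖ ^ 2
        ≤ ‖(l • (1 : H →L[ℂ] H) + T) (resolventOp T l y)‖ ^ 2 := by
      rw [norm_sq_shift_apply, norm_sq_shift_apply]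
      have h1 := re_Tx_x_nonneg hpos (resolventOp T l y)
      nlinarith [mul_nonneg (sub_nonneg.mpr hml) h1,
        mul_nonneg (mul_nonneg (sub_nonneg.mpr hml) (by linarith : (0:ℝ) ≤ l + m))
          (sq_nonneg ‖resolventOp T l y‖)]
    have h2 := Real.sqrt_le_sqrt hsq
    rw [Real.sqrt_sq (norm_nonneg _), Real.sqrt_sq (norm_nonneg _)] at h2
    rw [ContinuousLinearMap.mul_apply]
    calc ‖(m • (1 : H →L[ℂ] H) + T) (resolventOp T l y)‖
        ≤ ‖(l • (1 : H →L[ℂ] H) + T) (resolventOp T l y)‖ := h2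
      _ = ‖y‖ := by rw [hy]
  calc ‖x - l • resolventOp T l x‖
      = ‖(1 - l • resolventOp T l) x‖ := by
        simp [ContinuousLinearMap.sub_apply, ContinuousLinearMap.smul_apply]
    _ = ‖(((m • (1 : H →L[ℂ] H) + T) * resolventOp T l) * (1 - m • resolventOp T m)) x‖ := by
        rw [← hOp]
    _ = ‖((m • (1 : H →L[ℂ] H) + T) * resolventOp T l) ((1 - m • resolventOp T m) x)‖ := by
        rw [ContinuousLinearMap.mul_apply]
    _ ≤ ‖(1 - m • resolventOp T m) x‖ := hB _
    _ = ‖x - m • resolventOp T m x‖ := by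
        simp [ContinuousLinearMap.sub_apply, ContinuousLinearMap.smul_apply]

end mono

section conv
variable {T : H →L[ℂ] H}

lemma inner_swap (hT : IsSelfAdjoint T) (u x : H) : ⟪T u, x⟫_ℂ = ⟪u, T x⟫_ℂ := by
  conv_lhs => rw [← hT.adjoint_eq]
  exact ContinuousLinearMap.adjoint_inner_left T x u

lemma ker_eq_orth_range (hT : IsSelfAdjoint T) :
    (LinearMap.ker (T : H →ₗ[ℂ] H) : Submodule ℂ H) = (LinearMap.range (T : H →ₗ[ℂ] H))ᗮ := by
  ext x
  rw [LinearMap.mem_ker, Submodule.mem_orthogonal]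
  constructor
  · intro hx y hy
    obtain ⟨u, rfl⟩ := hy
    rw [show (T : H →ₗ[ℂ] H) u = T u from rfl, inner_swap hT, show T x = 0 from hx, inner_zero_right]
  · intro hx
    have h1 := hx (T (T x)) ⟨T x, rfl⟩
    rw [inner_swap hT (T x) x] at h1
    rwa [inner_self_eq_zero] at h1

lemma tendsto_smul_R (hT : IsSelfAdjoint T) (hpos : 0 ≤ T) {h : H}
    (hh : h ∈ (LinearMap.range (T : H →ₗ[ℂ] H) : Submodule ℂ H).topologicalClosure) :
    Filter.Tendsto (fun l : ℝ => l • resolventOp T l h)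
      (nhdsWithin 0 (Set.Ioi 0)) (nhds 0) := by
  rw [NormedAddCommGroup.tendsto_nhds_zero]
  intro ε hε
  have hcl : h ∈ closure ((LinearMap.range (T : H →ₗ[ℂ] H) : Submodule ℂ H) : Set H) := by
    rw [← Submodule.topologicalClosure_coe]
    exact hh
  obtain ⟨y, hy, hdy⟩ := Metric.mem_closure_iff.mp hcl (ε / 2) (by linarith)
  obtain ⟨u, rfl⟩ := LinearMap.mem_range.mp hy
  set δ : ℝ := (ε / 2) / (2 * ‖u‖ + 1) with hδ
  have hδpos : 0 < δ := by positivity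
  have hmem : Set.Ioo (0 : ℝ) δ ∈ nhdsWithin (0 : ℝ) (Set.Ioi 0) :=
    Ioo_mem_nhdsGT_of_mem ⟨le_refl 0, hδpos⟩
  filter_upwards [hmem] with l hl
  have hl0 : 0 < l := hl.1
  have hu : IsUnit (l • (1 : H →L[ℂ] H) + T) := isUnit_shift hT hpos hl0
  have hsplit : resolventOp T l h
      = resolventOp T l (h - T u) + resolventOp T l (T u) := by
    rw [← map_add, sub_add_cancel]
  have hRTu : resolventOp T l (T u) = u - l • resolventOp T l u := by
    have h1 : resolventOp T l (T u) = ((resolventOp T l) * T) u := rfl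
    rw [h1, (commute_R_T hu).eq, TR_eq hu]
    simp [ContinuousLinearMap.sub_apply, ContinuousLinearMap.smul_apply]
  have b1 : ‖l • resolventOp T l (h - T u)‖ ≤ ‖h - T u‖ := by
    rw [norm_smul, Real.norm_eq_abs, abs_of_pos hl0]
    exact R_bound hpos hl0 hu _
  have b2 : ‖l • resolventOp T l (T u)‖ ≤ 2 * l * ‖u‖ := by
    rw [hRTu, norm_smul, Real.norm_eq_abs, abs_of_pos hl0]
    have h2 : ‖u - l • resolventOp T l u‖ ≤ ‖u‖ + ‖l • resolventOp T l u‖ := norm_sub_le _ _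
    have h3 : ‖l • resolventOp T l u‖ ≤ ‖u‖ := by
      rw [norm_smul, Real.norm_eq_abs, abs_of_pos hl0]
      exact R_bound hpos hl0 hu _
    nlinarith [norm_nonneg (u - l • resolventOp T l u)]
  have hdist : ‖h - T u‖ < ε / 2 := by
    rw [← dist_eq_norm]; exact hdy
  have hll : 2 * l * ‖u‖ < ε / 2 := by
    have h4 : l < δ := hl.2
    have h5 : l * (2 * ‖u‖ + 1) < δ * (2 * ‖u‖ + 1) := by
      apply mul_lt_mul_of_pos_right h4; positivity
    rw [hδ] at h5
    rw [div_mul_cancel₀] at h5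
    · nlinarith [norm_nonneg u]
    · positivity
  calc ‖l • resolventOp T l h‖
      = ‖l • resolventOp T l (h - T u) + l • resolventOp T l (T u)‖ := by
        rw [hsplit, smul_add]
    _ ≤ ‖l • resolventOp T l (h - T u)‖ + ‖l • resolventOp T l (T u)‖ := norm_add_le _ _
    _ < ε := by linarith

end conv

/-- For `f = √T g`, `‖√T (R_λ f)‖ → ‖P g‖` as `λ → 0⁺`, where `P` is the orthogonal
projection onto `(ker T)ᗮ`; in particular if `g ⟂ ker T` then `‖√T (R_λ f)‖²`
increases to `‖g‖²` as `λ` decreases to `0`. -/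
theorem tendsto_norm_sqrt_resolvent (T : H →L[ℂ] H) (hT : IsSelfAdjoint T)
    (hpos : 0 ≤ T) (g : H) :
    Filter.Tendsto (fun l : ℝ => ‖CFC.sqrt T (resolventOp T l (CFC.sqrt T g))‖)
        (nhdsWithin 0 (Set.Ioi 0))
        (nhds ‖(Submodule.orthogonalProjection (LinearMap.ker (T : H →ₗ[ℂ] H))ᗮ g : H)‖) ∧
      (g ∈ (LinearMap.ker (T : H →ₗ[ℂ] H))ᗮ →
        Filter.Tendsto (fun l : ℝ => ‖CFC.sqrt T (resolventOp T l (CFC.sqrt T g))‖ ^ 2)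
            (nhdsWithin 0 (Set.Ioi 0)) (nhds (‖g‖ ^ 2)) ∧
          ∀ l m : ℝ, 0 < m → m ≤ l →
            ‖CFC.sqrt T (resolventOp T l (CFC.sqrt T g))‖ ^ 2
              ≤ ‖CFC.sqrt T (resolventOp T m (CFC.sqrt T g))‖ ^ 2) := by
  haveI : CompleteSpace (LinearMap.ker (T : H →ₗ[ℂ] H) : Submodule ℂ H) :=
    (ContinuousLinearMap.isClosed_ker T).completeSpace_coe
  set h : H := (Submodule.orthogonalProjection (LinearMap.ker (T : H →ₗ[ℂ] H))ᗮ g : H) with hh_def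
  have hk_mem : g - h ∈ (LinearMap.ker (T : H →ₗ[ℂ] H) : Submodule ℂ H) := by
    have h1 := Submodule.sub_starProjection_mem_orthogonal (K := (LinearMap.ker (T : H →ₗ[ℂ] H))ᗮ) g
    rwa [Submodule.orthogonal_orthogonal] at h1
  have hTk : T (g - h) = 0 := LinearMap.mem_ker.mp hk_mem
  have hh_mem : h ∈ (LinearMap.range (T : H →ₗ[ℂ] H) : Submodule ℂ H).topologicalClosure := by
    have h1 : h ∈ (LinearMap.ker (T : H →ₗ[ℂ] H))ᗮ := SetLike.coe_mem _
    rwa [ker_eq_orth_range hT, Submodule.orthogonal_orthogonal_eq_closure] at h1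
  -- the main strong convergence
  have hmain : Filter.Tendsto (fun l : ℝ => g - l • resolventOp T l g)
      (nhdsWithin (0:ℝ) (Set.Ioi 0)) (nhds h) := by
    have h0 : Filter.Tendsto (fun l : ℝ => h - l • resolventOp T l h)
        (nhdsWithin (0:ℝ) (Set.Ioi 0)) (nhds h) := by
      have h1 := tendsto_const_nhds (x := h)
          (f := nhdsWithin (0:ℝ) (Set.Ioi 0)) |>.sub (tendsto_smul_R hT hpos hh_mem)
      simpa using h1
    apply h0.congr'
    filter_upwards [self_mem_nhdsWithin] with l hl
    have hl0 : (0:ℝ) < l := hl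
    have hu : IsUnit (l • (1 : H →L[ℂ] H) + T) := isUnit_shift hT hpos hl0
    have h2 : l • resolventOp T l (g - h) = g - h := R_ker hl0 hu hTk
    have h3 : resolventOp T l g = resolventOp T l (g - h) + resolventOp T l h := by
      rw [← map_add, sub_add_cancel]
    rw [h3, smul_add, h2]
    abel
  have part1 : Filter.Tendsto (fun l : ℝ => ‖CFC.sqrt T (resolventOp T l (CFC.sqrt T g))‖)
      (nhdsWithin (0:ℝ) (Set.Ioi 0)) (nhds ‖h‖) := by
    apply hmain.norm.congr'
    filter_upwards [self_mem_nhdsWithin] with l hl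
    rw [sqrt_R_sqrt_apply hpos (isUnit_shift hT hpos hl)]
  refine ⟨part1, fun hg => ?_⟩
  have hproj : h = g := by
    rw [hh_def]
    exact Submodule.starProjection_eq_self_iff.mpr hg
  constructor
  · have := part1.pow 2
    rwa [hproj] at this
  · intro l m hm0 hml
    have hl0 : (0:ℝ) < l := lt_of_lt_of_le hm0 hml
    rw [sqrt_R_sqrt_apply hpos (isUnit_shift hT hpos hl0),
      sqrt_R_sqrt_apply hpos (isUnit_shift hT hpos hm0)]
    exact pow_le_pow_left₀ (norm_nonneg _) (mono_norm hT hpos hm0 hml g) 2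
end

section
/- Let H be a complex Hilbert space and T : H →L[ℂ] H a bounded self-adjoint operator with 0 ≤ T, and for λ > 0 let R_λ = (λ•1 + T)⁻¹. Let (λ_n)_{n≥1} be a sequence of positive reals with n · λ_n → 0 as n → ∞. Then for every g ∈ H and f = √T g, one has √n · λ_n · ‖R_{λ_n} f‖ → 0 as n → ∞. -/
open scoped InnerProductSpace

variable {H : Type*} [NormedAddCommGroup H] [InnerProductSpace ℂ H] [CompleteSpace H]

lemma resolvent_key_bound (T : H →L[ℂ] H) (hT : IsSelfAdjoint T) (hpos : 0 ≤ T)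
    {l : ℝ} (hl : 0 < l) (g : H) :
    l * ‖resolventOp T l (CFC.sqrt T g)‖ ≤ Real.sqrt l / 2 * ‖g‖ := by
  set S := CFC.sqrt T with hSdef
  set u := l • (1 : H →L[ℂ] H) + T with hudef
  set R := Ring.inverse u with hRdef
  by_cases hu : IsUnit u
  · have hS2 : S * S = T := CFC.sqrt_mul_sqrt_self T hpos
    have hS : IsSelfAdjoint S := IsSelfAdjoint.of_nonneg (CFC.sqrt_nonneg T)
    have hST : S * T = T * S := by rw [← hS2, mul_assoc]
    have hSu : S * u = u * S := by
      simp only [hudef, mul_add, add_mul, hST, mul_smul_comm, smul_mul_assoc, mul_one, one_mul]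
    have hRS : R * S = S * R := by
      calc R * S = R * S * (u * R) := by rw [Ring.mul_inverse_cancel u hu, mul_one]
      _ = R * (S * u) * R := by simp only [mul_assoc]
      _ = R * (u * S) * R := by rw [hSu]
      _ = (R * u) * (S * R) := by simp only [mul_assoc]
      _ = S * R := by rw [Ring.inverse_mul_cancel u hu, one_mul]
    set x := R g with hxdef
    have hux : u x = g := by
      have : (u * R) g = g := by rw [Ring.mul_inverse_cancel u hu]; simp
      simpa [ContinuousLinearMap.mul_apply] using this
    have hRSg : R (S g) = S x := by
      have : (R * S) g = (S * R) g := by rw [hRS]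
      simpa [ContinuousLinearMap.mul_apply] using this
    -- ‖S x‖² = re ⟪x, T x⟫
    have hSx : ‖S x‖ ^ 2 = Complex.re ⟪x, T x⟫_ℂ := by
      have h1 : ⟪S x, S x⟫_ℂ = ⟪x, T x⟫_ℂ := by
        rw [← hS.adjoint_eq, ContinuousLinearMap.adjoint_inner_left, hS.adjoint_eq, ← hS2,
          ContinuousLinearMap.mul_apply]
      rw [← inner_self_eq_norm_sq (𝕜 := ℂ), h1]; rfl
    -- key inequality
    have hkey : l ^ 2 * Complex.re ⟪x, T x⟫_ℂ ≤ l / 4 * ‖g‖ ^ 2 := by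
      have hux' : g = (l : ℂ) • x + T x := by
        rw [← hux]
        simp [hudef, ContinuousLinearMap.smul_apply, Complex.coe_smul]
      have e3 : RCLike.re ((l:ℂ) * ⟪x, T x⟫_ℂ) = l * Complex.re ⟪x, T x⟫_ℂ :=
        RCLike.re_ofReal_mul l _
      have e1 : ‖g‖ ^ 2 = l ^ 2 * ‖x‖ ^ 2 + 2 * (l * Complex.re ⟪x, T x⟫_ℂ) + ‖T x‖ ^ 2 := by
        rw [hux', norm_add_sq (𝕜 := ℂ), inner_smul_left]
        simp only [norm_smul, mul_pow, Complex.norm_real, Complex.norm_ofNat, map_mul,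
          Complex.conj_ofReal, RCLike.re_ofReal_mul, Complex.mul_re, Complex.ofReal_re, Complex.ofReal_im,
          Real.norm_eq_abs, sq_abs]
        rw [e3]

      have e2 : 0 ≤ ‖(l : ℂ) • x - T x‖ ^ 2 := by positivity
      rw [norm_sub_sq (𝕜 := ℂ), inner_smul_left] at e2
      simp only [norm_smul, mul_pow, Complex.norm_real, map_mul, Complex.conj_ofReal,
        RCLike.re_ofReal_mul, Real.norm_eq_abs, sq_abs] at e2
      rw [e3] at e2
      nlinarith [hl, e2]
    have hnn : 0 ≤ Complex.re ⟪x, T x⟫_ℂ := by rw [← hSx]; positivity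
    have hres : resolventOp T l = R := rfl
    rw [hres, hRSg]
    have h1 : (l * ‖S x‖) ^ 2 ≤ (Real.sqrt l / 2 * ‖g‖) ^ 2 := by
      have : (Real.sqrt l) ^ 2 = l := Real.sq_sqrt hl.le
      calc (l * ‖S x‖) ^ 2 = l ^ 2 * ‖S x‖ ^ 2 := by ring
      _ = l ^ 2 * Complex.re ⟪x, T x⟫_ℂ := by rw [hSx]
      _ ≤ l / 4 * ‖g‖ ^ 2 := hkey
      _ = (Real.sqrt l / 2 * ‖g‖) ^ 2 := by rw [mul_pow, div_pow, this]; ring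
    exact le_of_pow_le_pow_left₀ two_ne_zero (by positivity) h1
  · have hres : resolventOp T l = R := rfl
    rw [hres, hRdef, Ring.inverse_non_unit u hu]
    simp
    positivity

/-- Deterministic core of the tuning-sequence argument: if `n · λₙ → 0` with `λₙ > 0`,
then `√n · λₙ · ‖R_{λₙ} (√T g)‖ → 0`. -/
theorem tendsto_sqrt_n_lambda_norm_resolvent (T : H →L[ℂ] H) (hT : IsSelfAdjoint T)
    (hpos : 0 ≤ T) (lam : ℕ → ℝ) (hlam : ∀ n, 0 < lam n)
    (hlim : Filter.Tendsto (fun n : ℕ => (n : ℝ) * lam n) Filter.atTop (nhds 0))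
    (g : H) :
    Filter.Tendsto
      (fun n : ℕ => Real.sqrt n * lam n * ‖resolventOp T (lam n) (CFC.sqrt T g)‖)
      Filter.atTop (nhds 0) := by
  have hb : ∀ n : ℕ, Real.sqrt n * lam n * ‖resolventOp T (lam n) (CFC.sqrt T g)‖
      ≤ Real.sqrt ((n : ℝ) * lam n) / 2 * ‖g‖ := by
    intro n
    have h1 := resolvent_key_bound T hT hpos (hlam n) g
    calc Real.sqrt n * lam n * ‖resolventOp T (lam n) (CFC.sqrt T g)‖
        = Real.sqrt n * (lam n * ‖resolventOp T (lam n) (CFC.sqrt T g)‖) := by ring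
      _ ≤ Real.sqrt n * (Real.sqrt (lam n) / 2 * ‖g‖) := by
          apply mul_le_mul_of_nonneg_left h1 (Real.sqrt_nonneg _)
      _ = Real.sqrt ((n : ℝ) * lam n) / 2 * ‖g‖ := by
          rw [Real.sqrt_mul (Nat.cast_nonneg n)]; ring
  have h0 : ∀ n : ℕ, 0 ≤ Real.sqrt n * lam n * ‖resolventOp T (lam n) (CFC.sqrt T g)‖ := by
    intro n
    have := (hlam n).le
    positivity
  have hg : Filter.Tendsto (fun n : ℕ => Real.sqrt ((n : ℝ) * lam n) / 2 * ‖g‖)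
      Filter.atTop (nhds 0) := by
    have h1 : Filter.Tendsto (fun n : ℕ => Real.sqrt ((n : ℝ) * lam n))
        Filter.atTop (nhds 0) := by
      have := (Real.continuous_sqrt.tendsto 0).comp hlim
      simp only [Function.comp_def, Real.sqrt_zero] at this
      exact this
    have := (h1.div_const 2).mul_const ‖g‖
    simpa using this
  exact squeeze_zero h0 hb hg
end
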